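/- arXiv:2108.00146 — 2 statements merged into one kernel-verified Lean document; each statement's English description precedes it below -/
import Mathlib

section
/- Let f_1,...,f_m ∈ [0,1], 1 ≤ k < m, and Ỹ ⊆ {1,...,m} with |Ỹ| = k. Then the minimum over λ ∈ ℝ of Σ_{j∈Ỹ} max(λ − f_j, 0) + Σ_{j∉Ỹ} max(f_j − λ, 0) equals Σ_{j=1}^k f_[j] − Σ_{j∈Ỹ} f_j, the gap between the sum of the k largest values and the sum of the values indexed by Ỹ. -/
/-- The values of `f` sorted in descending order. -/
noncomputable def sortedDesc {m : ℕ} (f : Fin m → ℝ) : List ℝ :=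
  (List.ofFn f).mergeSort (· ≥ ·)

/-- The `j`-th largest value among `f 0, ..., f (m-1)` (1-indexed). -/
noncomputable def nthLargest {m : ℕ} (f : Fin m → ℝ) (j : ℕ) : ℝ :=
  (sortedDesc f).getD (j - 1) 0

/-- The sum of the `k` largest values among `f 0, ..., f (m-1)`. -/
noncomputable def topSum {m : ℕ} (f : Fin m → ℝ) (k : ℕ) : ℝ :=
  ((sortedDesc f).take k).sum

theorem stmt9 {m k : ℕ} (f : Fin m → ℝ) (hf : ∀ j, f j ∈ Set.Icc (0:ℝ) 1)
    (hk1 : 1 ≤ k) (hkm : k < m) (Y : Finset (Fin m)) (hY : Y.card = k) :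
    IsLeast (Set.range fun lam : ℝ =>
        ∑ j ∈ Y, max (lam - f j) 0 + ∑ j ∈ Yᶜ, max (f j - lam) 0)
      (topSum f k - ∑ j ∈ Y, f j) := by
  clear hf
  set σ := Tuple.sort (fun i => -f i) with hσdef
  have hanti : Antitone (f ∘ σ) := by
    intro a b hab
    have h := Tuple.monotone_sort (fun i => -f i) hab
    simpa using h
  have hL : sortedDesc f = List.ofFn (f ∘ σ) := by
    apply fun hp h1 h2 => List.Perm.eq_of_pairwise' (r := fun a b : ℝ => a ≥ b) h1 h2 hp
    · exact (List.mergeSort_perm _ _).trans (σ.ofFn_comp_perm f).symm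
    · unfold sortedDesc
      have h := List.pairwise_mergeSort (le := fun a b : ℝ => decide (a ≥ b))
        (fun a b c h1 h2 => by
          simp only [decide_eq_true_eq] at h1 h2 ⊢; exact le_trans h2 h1)
        (fun a b => by
          simp only [Bool.or_eq_true, decide_eq_true_eq]; exact le_total b a)
        (List.ofFn f)
      refine h.imp ?_
      intro a b hab
      simpa using hab
    · rw [List.pairwise_ofFn]
      intro i j hij
      exact hanti hij.le
  -- the set of indices of the k largest values
  set T : Finset (Fin m) := Finset.univ.filter fun i : Fin m => (i : ℕ) < k with hT
  have hTcard : T.card = k := by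
    rw [hT, show (Finset.univ.filter fun i : Fin m => (i:ℕ) < k) = Finset.Iio ⟨k, hkm⟩ by
      ext i; simp [Fin.lt_def]]
    simp
  set S : Finset (Fin m) := T.map σ.toEmbedding with hS
  have hScard : S.card = k := by rw [hS, Finset.card_map, hTcard]
  have hts : topSum f k = ∑ j ∈ S, f j := by
    rw [topSum, hL, List.sum_take_ofFn, hS, Finset.sum_map]
    rfl
  set i₀ : Fin m := ⟨k - 1, by omega⟩ with hi₀
  set lam₀ : ℝ := f (σ i₀) with hlam₀
  have hmemS : ∀ j : Fin m, j ∈ S ↔ ((σ.symm j : Fin m) : ℕ) < k := by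
    intro j
    rw [hS]
    simp only [Finset.mem_map, Equiv.coe_toEmbedding, hT, Finset.mem_filter,
      Finset.mem_univ, true_and]
    constructor
    · rintro ⟨a, ha, rfl⟩; simpa using ha
    · intro h; exact ⟨σ.symm j, h, by simp⟩
  have hge : ∀ j ∈ S, lam₀ ≤ f j := by
    intro j hj
    have h1 : ((σ.symm j : Fin m) : ℕ) < k := (hmemS j).1 hj
    have h2 : σ.symm j ≤ i₀ := by rw [Fin.le_def]; simp only [hi₀]; omega
    have := hanti h2
    simpa using this
  have hle : ∀ j ∉ S, f j ≤ lam₀ := by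
    intro j hj
    have h1 : ¬ ((σ.symm j : Fin m) : ℕ) < k := fun h => hj ((hmemS j).2 h)
    have h2 : i₀ ≤ σ.symm j := by rw [Fin.le_def]; simp only [hi₀]; omega
    have := hanti h2
    simpa using this
  -- common algebra
  have key : ∀ lam : ℝ, ∑ j ∈ S \ Y, (f j - lam) + ∑ j ∈ Y \ S, (lam - f j)
      = ∑ j ∈ S, f j - ∑ j ∈ Y, f j := by
    intro lam
    have hc : (S \ Y).card = (Y \ S).card := by
      have h1 := Finset.card_sdiff_add_card_inter S Y
      have h2 := Finset.card_sdiff_add_card_inter Y S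
      rw [Finset.inter_comm] at h2
      omega
    have hc' : ((S \ Y).card : ℝ) = ((Y \ S).card : ℝ) := by exact_mod_cast hc
    have h3 : ∑ j ∈ S \ Y, f j + ∑ j ∈ S ∩ Y, f j = ∑ j ∈ S, f j := by
      rw [← Finset.sdiff_inter_self_left S Y]
      exact Finset.sum_sdiff Finset.inter_subset_left
    have h4 : ∑ j ∈ Y \ S, f j + ∑ j ∈ S ∩ Y, f j = ∑ j ∈ Y, f j := by
      rw [← Finset.sdiff_inter_self_left Y S, Finset.inter_comm S Y,
        Finset.sum_sdiff Finset.inter_subset_left]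
    have h5 : ∑ j ∈ S \ Y, (f j - lam) = ∑ j ∈ S \ Y, f j - (S \ Y).card * lam := by
      rw [Finset.sum_sub_distrib, Finset.sum_const, nsmul_eq_mul]
    have h6 : ∑ j ∈ Y \ S, (lam - f j) = (Y \ S).card * lam - ∑ j ∈ Y \ S, f j := by
      rw [Finset.sum_sub_distrib, Finset.sum_const, nsmul_eq_mul]
    rw [h5, h6, hc']
    linarith
  constructor
  · -- membership: achieved at lam₀
    refine ⟨lam₀, ?_⟩
    show ∑ j ∈ Y, max (lam₀ - f j) 0 + ∑ j ∈ Yᶜ, max (f j - lam₀) 0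
      = topSum f k - ∑ j ∈ Y, f j
    have e1 : ∑ j ∈ Y, max (lam₀ - f j) 0 = ∑ j ∈ Y \ S, (lam₀ - f j) := by
      rw [← Finset.sum_filter_add_sum_filter_not Y (fun j => j ∈ S)]
      have h1 : ∑ j ∈ Y.filter (fun j => j ∈ S), max (lam₀ - f j) 0 = 0 :=
        Finset.sum_eq_zero fun j hj => by
          have hjS : j ∈ S := (Finset.mem_filter.1 hj).2
          have := hge j hjS
          exact max_eq_right (by linarith)
      rw [h1, zero_add, Finset.sdiff_eq_filter]
      exact Finset.sum_congr rfl fun j hj => by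
        have hjS : j ∉ S := (Finset.mem_filter.1 hj).2
        have := hle j hjS
        exact max_eq_left (by linarith)
    have e2 : ∑ j ∈ Yᶜ, max (f j - lam₀) 0 = ∑ j ∈ S \ Y, (f j - lam₀) := by
      rw [← Finset.sum_filter_add_sum_filter_not Yᶜ (fun j => j ∈ S)]
      have h1 : ∑ j ∈ Yᶜ.filter (fun j => ¬ j ∈ S), max (f j - lam₀) 0 = 0 :=
        Finset.sum_eq_zero fun j hj => by
          have hjS : j ∉ S := (Finset.mem_filter.1 hj).2
          have := hle j hjS
          exact max_eq_right (by linarith)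
      have h2 : Yᶜ.filter (fun j => j ∈ S) = S \ Y := by
        ext j
        simp [Finset.mem_filter, Finset.mem_compl, Finset.mem_sdiff, and_comm]
      rw [h1, add_zero, h2]
      exact Finset.sum_congr rfl fun j hj => by
        have hjS : j ∈ S := (Finset.mem_sdiff.1 hj).1
        have := hge j hjS
        exact max_eq_left (by linarith)
    rw [e1, e2, hts, ← key lam₀]
    ring
  · -- lower bound
    rintro x ⟨lam, rfl⟩
    show topSum f k - ∑ j ∈ Y, f j
      ≤ ∑ j ∈ Y, max (lam - f j) 0 + ∑ j ∈ Yᶜ, max (f j - lam) 0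
    have b1 : ∑ j ∈ Y \ S, (lam - f j) ≤ ∑ j ∈ Y, max (lam - f j) 0 := by
      calc ∑ j ∈ Y \ S, (lam - f j) ≤ ∑ j ∈ Y \ S, max (lam - f j) 0 :=
            Finset.sum_le_sum fun j _ => le_max_left _ _
        _ ≤ ∑ j ∈ Y, max (lam - f j) 0 :=
            Finset.sum_le_sum_of_subset_of_nonneg Finset.sdiff_subset
              fun j _ _ => le_max_right _ _
    have b2 : ∑ j ∈ S \ Y, (f j - lam) ≤ ∑ j ∈ Yᶜ, max (f j - lam) 0 := by
      have hsub : S \ Y ⊆ Yᶜ := fun j hj =>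
        Finset.mem_compl.2 (Finset.mem_sdiff.1 hj).2
      calc ∑ j ∈ S \ Y, (f j - lam) ≤ ∑ j ∈ S \ Y, max (f j - lam) 0 :=
            Finset.sum_le_sum fun j _ => le_max_left _ _
        _ ≤ ∑ j ∈ Yᶜ, max (f j - lam) 0 :=
            Finset.sum_le_sum_of_subset_of_nonneg hsub fun j _ _ => le_max_right _ _
    have := key lam
    rw [hts]
    linarith
end

section
/- The function (f_1,...,f_m) ↦ max_{j∈Y} f_j − f_[k+1], where f_[k+1] is the (k+1)-th largest entry, composed with the positive part, i.e., g(f) = max( max_{j∈Y} f_j − f_[k+1], 0 ), is bounded above by (1/(m−k)) times the sum of the (m−k) largest elements of { max(max_{y∈Y} f_y − f_j, 0) : j = 1,...,m }. -/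
lemma sortedDesc_perm {m : ℕ} (f : Fin m → ℝ) : (sortedDesc f).Perm (List.ofFn f) :=
  List.mergeSort_perm _ _

lemma sortedDesc_length {m : ℕ} (f : Fin m → ℝ) : (sortedDesc f).length = m := by
  rw [(sortedDesc_perm f).length_eq, List.length_ofFn]

lemma sortedDesc_pairwise {m : ℕ} (f : Fin m → ℝ) : (sortedDesc f).Pairwise (· ≥ ·) := by
  have := List.pairwise_mergeSort (le := fun a b : ℝ => a ≥ b) ?_ ?_ (List.ofFn f)
  · exact this.imp (by simp)
  · intro a b c; simp only [decide_eq_true_eq]; intros; linarith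
  · intro a b; simp [le_total b a]

/-- In a descending-sorted list with at least `n` elements `≥ t`, the first `n`
elements are all `≥ t`. -/
lemma take_ge_of_count {S : List ℝ} (hs : S.Pairwise (· ≥ ·)) {t : ℝ} {n : ℕ}
    (hc : n ≤ S.countP (fun x => t ≤ x)) : ∀ x ∈ S.take n, t ≤ x := by
  intro x hx
  by_contra hlt
  push_neg at hlt
  obtain ⟨i, hi, rfl⟩ := List.getElem_of_mem hx
  rw [List.getElem_take] at hlt
  have hin : i < n := lt_of_lt_of_le hi (by simpa using List.length_take_le n S)
  have hiS : i < S.length := lt_of_lt_of_le hi (by simpa using List.length_take_le' n S)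
  -- every element of S.drop i is < t
  have hdrop : (S.drop i).countP (fun x => t ≤ x) = 0 := by
    rw [List.countP_eq_zero]
    intro a ha
    obtain ⟨j, hj, rfl⟩ := List.getElem_of_mem ha
    rw [List.getElem_drop]
    simp only [decide_eq_true_eq, not_le]
    rcases Nat.eq_zero_or_pos j with rfl | hj0
    · simpa using hlt
    · have hij : i < i + j := by omega
      have := (List.pairwise_iff_getElem.1 hs) i (i + j) hiS (by
        have := hj; rw [List.length_drop] at this; omega) hij
      exact lt_of_le_of_lt this hlt
  have hcount : S.countP (fun x => t ≤ x) ≤ i := by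
    conv_lhs => rw [← List.take_append_drop i S]
    rw [List.countP_append, hdrop, add_zero]
    calc List.countP (fun x => decide (t ≤ x)) (S.take i) ≤ (S.take i).length :=
          List.countP_le_length
      _ ≤ i := by simpa using List.length_take_le i S
  omega

theorem stmt14 {m k : ℕ} (f : Fin m → ℝ) (Y : Finset (Fin m)) (hYne : Y.Nonempty)
    (hk1 : 1 ≤ k) (hkm : k < m) :
    max (Y.sup' hYne f - nthLargest f (k + 1)) 0
      ≤ (1 / ((m : ℝ) - k)) * topSum (fun j => max (Y.sup' hYne f - f j) 0) (m - k) := by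
  set M := Y.sup' hYne f with hM
  set g : Fin m → ℝ := fun j => max (M - f j) 0 with hg
  set L := sortedDesc f with hL
  set S := sortedDesc g with hS
  set c : ℝ := L.getD k 0 with hc
  set t : ℝ := max (M - c) 0 with ht
  set n : ℕ := m - k with hn
  have hLlen : L.length = m := sortedDesc_length f
  have hSlen : S.length = m := sortedDesc_length g
  have hkL : k < L.length := by omega
  have hcL : c = L[k] := by rw [hc, List.getD_eq_getElem _ _ hkL]
  -- number of j with f j ≤ c is at least n
  have hcountf : n ≤ (List.ofFn f).countP (fun x => decide (x ≤ c)) := by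
    rw [← (sortedDesc_perm f).countP_eq, ← hL]
    conv_rhs => rw [← List.take_append_drop k L]
    rw [List.countP_append]
    have hdrop : List.countP (fun x => decide (x ≤ c)) (L.drop k) = (L.drop k).length := by
      rw [List.countP_eq_length]
      intro a ha
      obtain ⟨j, hj, rfl⟩ := List.getElem_of_mem ha
      rw [List.getElem_drop]
      simp only [decide_eq_true_eq]
      rcases Nat.eq_zero_or_pos j with rfl | hj0
      · simp [hcL]
      · have := (List.pairwise_iff_getElem.1 (sortedDesc_pairwise f)) k (k + j) hkL (by
          rw [List.length_drop, hLlen] at hj; rw [hLlen]; omega) (by omega)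
        rw [hcL]; exact this
    rw [hdrop, List.length_drop, hLlen]
    omega
  -- hence number of j with t ≤ g j is at least n
  have hcountg : n ≤ S.countP (fun x => decide (t ≤ x)) := by
    rw [(sortedDesc_perm g).countP_eq]
    rw [show (List.ofFn g) = List.map g (List.finRange m) by simp [List.ofFn_eq_map],
      List.countP_map]
    rw [show (List.ofFn f) = List.map f (List.finRange m) by simp [List.ofFn_eq_map],
      List.countP_map] at hcountf
    refine le_trans hcountf (List.countP_mono_left ?_)
    intro j _ hj
    simp only [Function.comp_apply, decide_eq_true_eq] at hj ⊢
    have : M - c ≤ M - f j := by linarith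
    exact max_le_max this le_rfl
  -- first n elements of S are ≥ t
  have htake : ∀ x ∈ S.take n, t ≤ x := take_ge_of_count (sortedDesc_pairwise g) hcountg
  have hlen_take : (S.take n).length = n := by rw [List.length_take]; omega
  have hsum : (n : ℝ) * t ≤ (S.take n).sum := by
    have := List.card_nsmul_le_sum (S.take n) t htake
    rw [hlen_take, nsmul_eq_mul] at this
    exact this
  have hnpos : (0 : ℝ) < (m : ℝ) - k := by
    have : (k : ℝ) < m := by exact_mod_cast hkm
    linarith
  have hncast : ((n : ℕ) : ℝ) = (m : ℝ) - k := by
    rw [hn]; push_cast [Nat.cast_sub hkm.le]; ring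
  have hgoal : max (M - nthLargest f (k + 1)) 0 = t := by
    rw [ht, hc, nthLargest]
    congr 2
  rw [hgoal]
  rw [div_mul_eq_mul_div, one_mul, le_div_iff₀ hnpos]
  calc t * ((m:ℝ) - k) = (n : ℝ) * t := by rw [hncast]; ring
    _ ≤ (S.take n).sum := hsum
    _ = topSum g n := rfl
end
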